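/- The fiber over the basepoint x of the fibration E(X,x)_j → X, where E(X,x)_j = X^I ∪_{P_x X} (P_x X × S^j) with the map given by evaluation of a path at its endpoint, is homotopy equivalent to the smash product (Ω_x X)_+ ∧ S^j, where Ω_x X is the based loop space of X at x. -/

import Mathlib

noncomputable section
set_option linter.unusedSectionVars false
set_option maxHeartbeats 1000000
attribute [local instance] Classical.propDecidable

section Glue
variable {A : Type} {X : Type} {Y : Type} [TopologicalSpace A] [TopologicalSpace X] [TopologicalSpace Y]

/-- The relation generating the adjunction space `X ∪_A Y`. -/
inductive GlueRel (f : A → X) (g : A → Y) : X ⊕ Y → X ⊕ Y → Prop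
  | rel (a : A) : GlueRel f g (Sum.inl (f a)) (Sum.inr (g a))

/-- The adjunction space (pushout) `X ∪_A Y` of `f : A → X`, `g : A → Y`. -/
def Glue (f : A → X) (g : A → Y) : Type := Quot (GlueRel f g)

instance (f : A → X) (g : A → Y) : TopologicalSpace (Glue f g) := by
  unfold Glue; infer_instance

def Glue.inl (f : A → X) (g : A → Y) : X → Glue f g := fun x => Quot.mk _ (Sum.inl x)
def Glue.inr (f : A → X) (g : A → Y) : Y → Glue f g := fun y => Quot.mk _ (Sum.inr y)

/-- Universal property of the adjunction space. -/
def Glue.desc {Z : Type} (f : A → X) (g : A → Y) (h : X → Z) (k : Y → Z)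
    (hc : ∀ a, h (f a) = k (g a)) : Glue f g → Z :=
  Quot.lift (Sum.elim h k) (by rintro _ _ ⟨a⟩; exact hc a)

end Glue

/-- Collapse a subset of `X` to a (disjointly added) basepoint. -/
def Collapse {X : Type} [TopologicalSpace X] (s : Set X) : Type :=
  Glue (fun a : s => (a : X)) (fun _ : s => (PUnit.unit : PUnit))

instance {X : Type} [TopologicalSpace X] (s : Set X) : TopologicalSpace (Collapse s) := by
  unfold Collapse; infer_instance

/-- The `j`-sphere. -/
def Sph (j : ℕ) : Type := Metric.sphere (0 : EuclideanSpace ℝ (Fin (j+1))) 1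
instance (j : ℕ) : TopologicalSpace (Sph j) := by unfold Sph; infer_instance

/-- The basepoint of the `j`-sphere. -/
def Sph.pt (j : ℕ) : Sph j := ⟨EuclideanSpace.single 0 1, by simp [EuclideanSpace.norm_single]⟩

variable (X : Type) [TopologicalSpace X] (x : X) (j : ℕ)

/-- The space of paths `[0,1] → X` starting at `x`. -/
def PathsFrom : Type := {γ : C(unitInterval, X) // γ 0 = x}
instance : TopologicalSpace (PathsFrom X x) := by unfold PathsFrom; infer_instance

/-- The based loop space `Ω_x X`. -/
def LoopsAt : Type := {γ : C(unitInterval, X) // γ 0 = x ∧ γ 1 = x}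
instance : TopologicalSpace (LoopsAt X x) := by unfold LoopsAt; infer_instance

/-- `E(X,x)_j = X^I ∪_{P_x X} (P_x X × S^j)`, the path-space model of the wedge `X ∨_x S^j`. -/
def EXxj : Type :=
  Glue (fun γ : PathsFrom X x => (γ.1 : C(unitInterval, X)))
       (fun γ : PathsFrom X x => ((γ, Sph.pt j) : PathsFrom X x × Sph j))
instance : TopologicalSpace (EXxj X x j) := by unfold EXxj; infer_instance

/-- The projection `E(X,x)_j → X`, evaluation of a path at its endpoint `1`. -/
def EXxjProj : EXxj X x j → X :=
  Glue.desc _ _ (fun γ => γ 1) (fun p => p.1.1 1) (fun _ => rfl)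

/-- The fiber of `E(X,x)_j → X` over the basepoint `x`. -/
def EXxjFiber : Type := {e : EXxj X x j // EXxjProj X x j e = x}
instance : TopologicalSpace (EXxjFiber X x j) := by unfold EXxjFiber; infer_instance

/-- `(Ω_x X)_+ ∧ S^j`, i.e. the quotient `(Ω_x X × S^j)/(Ω_x X × {pt})`. -/
def LoopSmashSph : Type :=
  Collapse {p : LoopsAt X x × Sph j | p.2 = Sph.pt j}
instance : TopologicalSpace (LoopSmashSph X x j) := by unfold LoopSmashSph; infer_instance

instance (j : ℕ) : T1Space (Sph j) := by unfold Sph; infer_instance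
instance (j : ℕ) : T2Space (Sph j) := by unfold Sph; infer_instance

namespace Gx

open Real

variable {j : ℕ}

def e0 (j : ℕ) : EuclideanSpace ℝ (Fin (j+1)) := EuclideanSpace.single 0 1

def aco {j : ℕ} (s : Sph j) : ℝ := Subtype.val s 0

lemma continuous_aco : Continuous (aco (j := j)) :=
  (EuclideanSpace.proj (0 : Fin (j+1))).continuous.comp continuous_subtype_val

lemma norm_e0 : ‖e0 j‖ = 1 := by simp [e0, EuclideanSpace.norm_single]

lemma inner_e0 (v : EuclideanSpace ℝ (Fin (j+1))) : (inner ℝ v (e0 j) : ℝ) = v 0 := by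
  rw [e0, EuclideanSpace.inner_single_right]; simp

lemma norm_sval (s : Sph j) : ‖Subtype.val s‖ = 1 := by
  have := s.2; rwa [mem_sphere_zero_iff_norm] at this

lemma aco_pt : aco (Sph.pt j) = 1 := by
  simp [aco, Sph.pt, EuclideanSpace.single_apply]

lemma abs_aco_le_one (s : Sph j) : |aco s| ≤ 1 := by
  have h := abs_real_inner_le_norm (Subtype.val s) (e0 j)
  rwa [inner_e0, norm_sval, norm_e0, one_mul] at h

lemma aco_le_one (s : Sph j) : aco s ≤ 1 := (abs_le.mp (abs_aco_le_one s)).2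
lemma neg_one_le_aco (s : Sph j) : -1 ≤ aco s := (abs_le.mp (abs_aco_le_one s)).1

lemma eq_pt_of_aco_eq_one (s : Sph j) (h : aco s = 1) : s = Sph.pt j := by
  have h2 : ‖Subtype.val s - e0 j‖^2 = 0 := by
    rw [norm_sub_sq_real, inner_e0, norm_sval, norm_e0]
    rw [show (Subtype.val s 0) = aco s from rfl, h]; norm_num
  have h3 : Subtype.val s - e0 j = 0 := by
    rw [← norm_eq_zero]; nlinarith [norm_nonneg (Subtype.val s - e0 j)]
  apply Subtype.ext
  have : Subtype.val s = e0 j := by linear_combination (norm := module) h3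
  exact this

/-- clamp to [-1/2, 1] -/
def cc (c : ℝ) : ℝ := max (min c 1) (-(1/2))

lemma cc_le_one (c : ℝ) : cc c ≤ 1 :=
  max_le (min_le_right c 1) (by norm_num)

lemma neg_half_le_cc (c : ℝ) : -(1/2) ≤ cc c := le_max_right _ _

lemma cc_eq (c : ℝ) (h1 : -(1/2) ≤ c) (h2 : c ≤ 1) : cc c = c := by
  rw [cc, min_eq_left h2, max_eq_left h1]

lemma continuous_cc : Continuous cc := (continuous_id.min continuous_const).max continuous_const

lemma one_add_cc_pos (c : ℝ) : 0 < 1 + cc c := by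
  have := neg_half_le_cc c; linarith

def gfun (c α : ℝ) : ℝ := min 1 (1 + 2*(α - cc c) / (1 + cc c))

def lam (c α : ℝ) : ℝ := 2 * Real.sqrt (max (cc c - α) 0 / ((1 + cc c)^2 * (1 - α)))

lemma lam_nonneg (c α : ℝ) : 0 ≤ lam c α := by
  unfold lam; positivity

lemma lam_eq_zero (c α : ℝ) (h : cc c ≤ α) : lam c α = 0 := by
  unfold lam
  rw [max_eq_right (by linarith), zero_div, Real.sqrt_zero, mul_zero]

lemma gfun_eq_one (c α : ℝ) (h : cc c ≤ α) : gfun c α = 1 := by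
  unfold gfun
  rw [min_eq_left]
  have h1 := one_add_cc_pos c
  have : 0 ≤ 2*(α - cc c) / (1 + cc c) := by
    apply div_nonneg (by linarith) (le_of_lt (one_add_cc_pos c))
  linarith

lemma gfun_eq (c α : ℝ) (h : α ≤ cc c) : gfun c α = 1 + 2*(α - cc c) / (1 + cc c) := by
  unfold gfun
  rw [min_eq_right]
  have h1 := one_add_cc_pos c
  have h2 : 2*(α - cc c) / (1 + cc c) ≤ 0 := by
    apply div_nonpos_of_nonpos_of_nonneg <;> linarith
  linarith

lemma lam_sq (c α : ℝ) (h : α < 1) :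
    lam c α ^ 2 = 4 * (max (cc c - α) 0) / ((1 + cc c)^2 * (1 - α)) := by
  unfold lam
  rw [mul_pow, Real.sq_sqrt]
  · ring
  · apply div_nonneg (le_max_right _ _)
    have h1 := one_add_cc_pos c
    nlinarith

lemma key_identity (c α : ℝ) (h1 : -1 ≤ α) (h2 : α ≤ 1) :
    lam c α ^ 2 * (1 - α^2) + gfun c α ^ 2 = 1 := by
  rcases eq_or_lt_of_le h2 with h | h
  · subst h
    rw [lam_eq_zero c 1 (cc_le_one c), gfun_eq_one c 1 (cc_le_one c)]; ring
  rcases le_or_gt (cc c) α with hle | hlt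
  · rw [lam_eq_zero c α hle, gfun_eq_one c α hle]; ring
  · rw [lam_sq c α h, gfun_eq c α (le_of_lt hlt), max_eq_left (by linarith)]
    have d1 : (1 : ℝ) + cc c ≠ 0 := ne_of_gt (one_add_cc_pos c)
    have d2 : (1 : ℝ) - α ≠ 0 := by linarith
    field_simp
    ring

lemma lam_le_four (c α : ℝ) (h1 : -1 ≤ α) (h2 : α ≤ 1) : lam c α ≤ 4 := by
  have hcc := neg_half_le_cc c
  have hcc1 := cc_le_one c
  rcases eq_or_lt_of_le h2 with h | h
  · subst h; rw [lam_eq_zero c 1 hcc1]; norm_num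
  rcases le_or_gt (cc c) α with hle | hlt
  · rw [lam_eq_zero c α hle]; norm_num
  · unfold lam
    have harg : max (cc c - α) 0 / ((1 + cc c)^2 * (1 - α)) ≤ 4 := by
      rw [max_eq_left (by linarith)]
      have hd : (0:ℝ) < (1 + cc c)^2 * (1 - α) :=
        mul_pos (pow_pos (one_add_cc_pos c) 2) (by linarith)
      rw [div_le_iff₀ hd]
      have h14 : (1/4 : ℝ) ≤ (1 + cc c)^2 := by nlinarith
      nlinarith [mul_le_mul_of_nonneg_right h14 (show (0:ℝ) ≤ 1 - α by linarith)]
    calc 2 * Real.sqrt (max (cc c - α) 0 / ((1 + cc c)^2 * (1 - α)))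
        ≤ 2 * Real.sqrt 4 := by
          apply mul_le_mul_of_nonneg_left (Real.sqrt_le_sqrt harg) (by norm_num)
      _ = 4 := by
          rw [show (4:ℝ) = 2^2 by norm_num, Real.sqrt_sq (by norm_num)]; norm_num

def wvec (c : ℝ) (s : Sph j) : EuclideanSpace ℝ (Fin (j+1)) :=
  lam c (aco s) • (Subtype.val s - aco s • e0 j) + gfun c (aco s) • e0 j

lemma inner_v_e0 (s : Sph j) : (inner ℝ (Subtype.val s - aco s • e0 j) (e0 j) : ℝ) = 0 := by
  rw [inner_sub_left, real_inner_smul_left, inner_e0]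
  have : (inner ℝ (e0 j) (e0 j) : ℝ) = 1 := by rw [inner_e0]; simp [e0, EuclideanSpace.single_apply]
  rw [this]
  simp [aco]

lemma norm_v_sq (s : Sph j) : ‖Subtype.val s - aco s • e0 j‖^2 = 1 - (aco s)^2 := by
  rw [norm_sub_sq_real, real_inner_smul_right, inner_e0, norm_smul, norm_sval, norm_e0]
  simp only [Real.norm_eq_abs]
  rw [mul_pow, sq_abs]
  have : Subtype.val s 0 = aco s := rfl
  rw [this]; ring

lemma norm_wvec (c : ℝ) (s : Sph j) : ‖wvec c s‖ = 1 := by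
  have h : ‖wvec c s‖^2 = 1 := by
    rw [wvec, norm_add_sq_real, real_inner_smul_left, real_inner_smul_right, inner_v_e0,
      norm_smul, norm_smul, norm_e0]
    simp only [Real.norm_eq_abs]
    rw [mul_pow, mul_pow, sq_abs, sq_abs, norm_v_sq]
    have := key_identity c (aco s) (neg_one_le_aco s) (aco_le_one s)
    nlinarith [this]
  nlinarith [norm_nonneg (wvec c s), h]

def STR (c : ℝ) (s : Sph j) : Sph j :=
  ⟨wvec c s, by rw [mem_sphere_zero_iff_norm]; exact norm_wvec c s⟩

lemma sval_STR (c : ℝ) (s : Sph j) : Subtype.val (STR c s) = wvec c s := rfl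

lemma aco_STR (c : ℝ) (s : Sph j) : aco (STR c s) = gfun c (aco s) := by
  show (wvec c s) 0 = _
  rw [wvec]
  have h1 : (e0 (j := j)) 0 = 1 := by simp [e0, EuclideanSpace.single_apply]
  show lam c (aco s) * ((Subtype.val s) 0 - aco s * (e0 j) 0) + gfun c (aco s) * (e0 j) 0 = _
  rw [h1]
  have : Subtype.val s 0 = aco s := rfl
  rw [this]; ring

lemma STR_pt_of_le (c : ℝ) (s : Sph j) (h : cc c ≤ aco s) : STR c s = Sph.pt j := by
  apply Subtype.ext
  show wvec c s = _
  rw [wvec, lam_eq_zero c _ h, gfun_eq_one c _ h]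
  show _ = e0 j
  module

lemma STR_pt (c : ℝ) : STR c (Sph.pt j) = Sph.pt j :=
  STR_pt_of_le c _ (by rw [aco_pt]; exact cc_le_one c)

lemma STR_one (s : Sph j) : STR 1 s = s := by
  have hc : cc 1 = 1 := cc_eq 1 (by norm_num) le_rfl
  rcases eq_or_lt_of_le (aco_le_one s) with h | h
  · rw [STR_pt_of_le 1 s (by rw [hc, h]), eq_pt_of_aco_eq_one s h]
  · apply Subtype.ext
    show wvec 1 s = Subtype.val s
    have hlam : lam 1 (aco s) = 1 := by
      unfold lam
      rw [hc, max_eq_left (by linarith)]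
      have hne : ((1:ℝ)+1)^2 * (1 - aco s) ≠ 0 := by nlinarith
      have : (1 - aco s) / ((1+1)^2 * (1 - aco s)) = 1/4 := by
        rw [div_eq_iff hne]; ring
      rw [this, show (1/4 : ℝ) = (1/2)^2 by norm_num, Real.sqrt_sq (by norm_num)]
      norm_num
    have hg : gfun 1 (aco s) = aco s := by
      rw [gfun_eq 1 _ (by rw [hc]; linarith), hc]
      field_simp
      ring
    rw [wvec, hlam, hg]
    module

lemma aco_eq_one_iff (s : Sph j) : aco s = 1 ↔ s = Sph.pt j :=
  ⟨eq_pt_of_aco_eq_one s, fun h => by rw [h, aco_pt]⟩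

lemma cc_zero : cc (0:ℝ) = 0 := cc_eq 0 (by norm_num) (by norm_num)
lemma cc_neg_half : cc (-(1/2) : ℝ) = -(1/2) := cc_eq _ le_rfl (by norm_num)

lemma aco_STR_zero (s : Sph j) : aco (STR 0 s) = min 1 (1 + 2 * aco s) := by
  rw [aco_STR]
  unfold gfun
  rw [cc_zero]
  norm_num

lemma STR_zero_pt_iff (s : Sph j) : STR 0 s = Sph.pt j ↔ 0 ≤ aco s := by
  constructor
  · intro h
    have h2 : aco (STR 0 s) = 1 := by rw [h, aco_pt]
    rw [aco_STR_zero] at h2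
    have h3 : (1:ℝ) ≤ 1 + 2 * aco s := by
      by_contra hc
      push_neg at hc
      rw [min_eq_right (le_of_lt hc)] at h2
      linarith
    linarith
  · intro h
    exact STR_pt_of_le 0 s (by rw [cc_zero]; exact h)

lemma STR_neg_half_pt_of (s : Sph j) (h : -(1/2) ≤ aco s) : STR (-(1/2)) s = Sph.pt j :=
  STR_pt_of_le _ s (by rw [cc_neg_half]; exact h)

lemma STR_comp (s : Sph j) : STR 0 (STR 0 s) = STR (-(1/2)) s := by
  rcases le_or_gt 0 (aco s) with h | h
  · rw [STR_pt_of_le 0 s (by rw [cc_zero]; exact h), STR_pt,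
      STR_pt_of_le _ s (by rw [cc_neg_half]; linarith)]
  · have ha' : aco (STR 0 s) = 1 + 2 * aco s := by
      rw [aco_STR_zero, min_eq_right (by linarith)]
    rcases le_or_gt (-(1/2)) (aco s) with h2 | h2
    · rw [STR_pt_of_le 0 (STR 0 s) (by rw [cc_zero, ha']; linarith),
        STR_neg_half_pt_of s h2]
    · -- deep case
      apply Subtype.ext
      show wvec 0 (STR 0 s) = wvec (-(1/2)) s
      have hv' : Subtype.val (STR 0 s) - aco (STR 0 s) • e0 j
          = lam 0 (aco s) • (Subtype.val s - aco s • e0 j) := by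
        rw [sval_STR, ha', wvec]
        have hg : gfun 0 (aco s) = 1 + 2 * aco s := by
          have := aco_STR_zero s
          rw [aco_STR] at this
          rw [this, min_eq_right (by linarith)]
        rw [hg]
        module
      rw [wvec, hv', ha', smul_smul]
      have hgeq : gfun 0 (1 + 2 * aco s) = gfun (-(1/2)) (aco s) := by
        unfold gfun
        rw [cc_zero, cc_neg_half]
        norm_num
        congr 1
        field_simp
        ring
      have hleq : lam 0 (1 + 2 * aco s) * lam 0 (aco s) = lam (-(1/2)) (aco s) := by
        have hnn1 : 0 ≤ lam 0 (1 + 2 * aco s) * lam 0 (aco s) :=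
          mul_nonneg (lam_nonneg _ _) (lam_nonneg _ _)
        have hsq : (lam 0 (1 + 2 * aco s) * lam 0 (aco s))^2 = (lam (-(1/2)) (aco s))^2 := by
          rw [mul_pow, lam_sq 0 _ (by linarith), lam_sq 0 _ (by nlinarith [neg_one_le_aco s]),
            lam_sq _ _ (by nlinarith [neg_one_le_aco s]), cc_zero, cc_neg_half]
          rw [max_eq_left (by linarith), max_eq_left (by linarith), max_eq_left (by linarith)]
          have d1 : (1:ℝ) - (1 + 2*aco s) ≠ 0 := by intro hc; nlinarith
          have d2 : (1:ℝ) - aco s ≠ 0 := by nlinarith [neg_one_le_aco s]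
          have d3 : aco s ≠ 0 := ne_of_lt (by linarith)
          field_simp
          ring
        calc lam 0 (1 + 2 * aco s) * lam 0 (aco s)
            = Real.sqrt ((lam 0 (1 + 2 * aco s) * lam 0 (aco s))^2) := (Real.sqrt_sq hnn1).symm
          _ = Real.sqrt ((lam (-(1/2)) (aco s))^2) := by rw [hsq]
          _ = lam (-(1/2)) (aco s) := Real.sqrt_sq (lam_nonneg _ _)
      rw [hgeq, hleq]
      rfl


lemma continuous_gpart : Continuous fun p : ℝ × Sph j => gfun p.1 (aco p.2) := by
  unfold gfun
  apply Continuous.min continuous_const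
  apply Continuous.add continuous_const
  apply Continuous.div
  · exact continuous_const.mul ((continuous_aco.comp continuous_snd).sub (continuous_cc.comp continuous_fst))
  · exact continuous_const.add (continuous_cc.comp continuous_fst)
  · intro p; exact ne_of_gt (one_add_cc_pos p.1)

lemma continuous_vpart : Continuous fun p : ℝ × Sph j =>
    (Subtype.val p.2 - aco p.2 • e0 j) := by
  apply Continuous.sub
  · exact continuous_subtype_val.comp continuous_snd
  · exact (continuous_aco.comp continuous_snd).smul continuous_const

lemma sval_pt : Subtype.val (Sph.pt j) = e0 j := rfl

lemma vpart_pt : Subtype.val (Sph.pt j) - aco (Sph.pt j) • e0 j = 0 := by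
  rw [sval_pt, aco_pt, one_smul, sub_self]

lemma continuous_wvec : Continuous fun p : ℝ × Sph j => wvec p.1 p.2 := by
  rw [continuous_iff_continuousAt]
  rintro ⟨c₀, s₀⟩
  have hg : ContinuousAt (fun p : ℝ × Sph j => gfun p.1 (aco p.2) • e0 j) (c₀, s₀) :=
    ((continuous_gpart).smul continuous_const).continuousAt
  have main : ContinuousAt (fun p : ℝ × Sph j =>
      lam p.1 (aco p.2) • (Subtype.val p.2 - aco p.2 • e0 j)) (c₀, s₀) := by
    rcases lt_or_eq_of_le (aco_le_one s₀) with h1 | h1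
    · refine ContinuousAt.smul (f := fun p : ℝ × Sph j => lam p.1 (aco p.2)) ?_ (continuous_vpart.continuousAt)
      unfold lam
      apply ContinuousAt.mul continuousAt_const
      apply Real.continuous_sqrt.continuousAt.comp
      apply ContinuousAt.div
      · exact (((continuous_cc.comp continuous_fst).sub
          (continuous_aco.comp continuous_snd)).max continuous_const).continuousAt
      · exact (((continuous_const.add (continuous_cc.comp continuous_fst)).pow 2).mul
          (continuous_const.sub (continuous_aco.comp continuous_snd))).continuousAt
      · exact ne_of_gt (mul_pos (pow_pos (one_add_cc_pos c₀) 2) (by linarith))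
    · have hs₀ : s₀ = Sph.pt j := eq_pt_of_aco_eq_one s₀ h1
      rcases lt_or_ge c₀ 1 with h2 | h2
      · -- eventually lam = 0
        have hopen : IsOpen {p : ℝ × Sph j | cc p.1 < aco p.2} :=
          isOpen_lt (continuous_cc.comp continuous_fst) (continuous_aco.comp continuous_snd)
        have hmem : (c₀, s₀) ∈ {p : ℝ × Sph j | cc p.1 < aco p.2} := by
          simp only [Set.mem_setOf_eq]
          rw [h1]
          exact max_lt (lt_of_le_of_lt (min_le_left c₀ 1) h2) (by norm_num)
        have hev : (fun p : ℝ × Sph j =>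
            lam p.1 (aco p.2) • (Subtype.val p.2 - aco p.2 • e0 j))
            =ᶠ[nhds (c₀, s₀)] (fun _ => (0 : EuclideanSpace ℝ (Fin (j+1)))) := by
          filter_upwards [hopen.mem_nhds hmem] with p hp
          rw [lam_eq_zero p.1 (aco p.2) (le_of_lt hp), zero_smul]
        exact (continuousAt_const (y := (0 : EuclideanSpace ℝ (Fin (j+1))))).congr hev.symm
      · -- squeeze
        have hval : lam c₀ (aco s₀) • (Subtype.val s₀ - aco s₀ • e0 j) = 0 := by
          rw [hs₀, vpart_pt, smul_zero]
        unfold ContinuousAt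
        have hval' : ((fun p : ℝ × Sph j =>
            lam p.1 (aco p.2) • (Subtype.val p.2 - aco p.2 • e0 j)) (c₀, s₀)) = 0 := hval
        rw [hval']
        apply squeeze_zero_norm (a := fun p : ℝ × Sph j =>
          4 * ‖Subtype.val p.2 - aco p.2 • e0 j‖)
        · intro p
          rw [norm_smul]
          have hb : ‖lam p.1 (aco p.2)‖ ≤ 4 := by
            rw [Real.norm_eq_abs, abs_of_nonneg (lam_nonneg _ _)]
            exact lam_le_four _ _ (neg_one_le_aco _) (aco_le_one _)
          exact mul_le_mul_of_nonneg_right hb (norm_nonneg _)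
        · have hv0 := (continuous_vpart (j := j)).tendsto (c₀, s₀)
          rw [hs₀] at hv0 ⊢
          rw [vpart_pt] at hv0
          have := (continuous_norm.tendsto (0 : EuclideanSpace ℝ (Fin (j+1)))).comp hv0
          simp only [norm_zero] at this
          simpa using this.const_mul 4
  have heq : (fun p : ℝ × Sph j => wvec p.1 p.2)
      = fun p => (lam p.1 (aco p.2) • (Subtype.val p.2 - aco p.2 • e0 j))
        + gfun p.1 (aco p.2) • e0 j := rfl
  rw [heq]
  exact main.add hg

lemma continuous_STR : Continuous fun p : ℝ × Sph j => STR p.1 p.2 :=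
  continuous_wvec.subtype_mk _

lemma continuous_STR_comp {α : Type} [TopologicalSpace α] {c : α → ℝ} {s : α → Sph j}
    (hc : Continuous c) (hs : Continuous s) : Continuous fun a => STR (c a) (s a) :=
  Continuous.comp (g := fun p : ℝ × Sph j => STR p.1 p.2) (f := fun a => (c a, s a))
    continuous_STR (hc.prodMk hs)

end Gx


namespace Gx

section PathStuff
variable {X : Type} [TopologicalSpace X]

def tcl (t : ℝ) : ℝ := max 0 (min t 1)

lemma tcl_nonneg (t : ℝ) : 0 ≤ tcl t := le_max_left 0 _
lemma tcl_le_one (t : ℝ) : tcl t ≤ 1 := max_le (by norm_num) (min_le_right t 1)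
lemma tcl_eq (t : ℝ) (h1 : 0 ≤ t) (h2 : t ≤ 1) : tcl t = t := by
  rw [tcl, min_eq_left h2, max_eq_right h1]
lemma tcl_zero : tcl 0 = 0 := tcl_eq 0 le_rfl (by norm_num)
lemma tcl_one : tcl 1 = 1 := tcl_eq 1 (by norm_num) le_rfl
lemma continuous_tcl : Continuous tcl := continuous_const.max (continuous_id.min continuous_const)

def phi (t : ℝ) : C(unitInterval, unitInterval) :=
  ⟨fun u => ⟨tcl t + (1 - tcl t) * u.1, by
    constructor
    · have := tcl_nonneg t
      have h2 := tcl_le_one t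
      nlinarith [u.2.1, u.2.2]
    · have := tcl_nonneg t
      have h2 := tcl_le_one t
      nlinarith [u.2.1, u.2.2]⟩, by
    apply Continuous.subtype_mk
    exact continuous_const.add (continuous_const.mul continuous_subtype_val)⟩

lemma continuous_phi : Continuous phi := by
  apply ContinuousMap.continuous_of_continuous_uncurry
  apply Continuous.subtype_mk
  exact (continuous_tcl.comp continuous_fst).add
    ((continuous_const.sub (continuous_tcl.comp continuous_fst)).mul
      (continuous_subtype_val.comp continuous_snd))

def Dmap (t : ℝ) (η : C(unitInterval, X)) : C(unitInterval, X) := η.comp (phi t)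

lemma continuous_Dmap : Continuous fun p : ℝ × C(unitInterval, X) => Dmap p.1 p.2 := by
  have : (fun p : ℝ × C(unitInterval, X) => Dmap p.1 p.2)
      = (fun q : C(unitInterval, unitInterval) × C(unitInterval, X) => q.2.comp q.1)
        ∘ (fun p => (phi p.1, p.2)) := rfl
  rw [this]
  exact ContinuousMap.continuous_comp'.comp
    ((continuous_phi.comp continuous_fst).prodMk continuous_snd)

lemma continuous_Dmap_comp {α : Type} [TopologicalSpace α] {t : α → ℝ}
    {η : α → C(unitInterval, X)} (ht : Continuous t) (hη : Continuous η) :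
    Continuous fun a => Dmap (t a) (η a) :=
  Continuous.comp (g := fun p : ℝ × C(unitInterval, X) => Dmap p.1 p.2)
    (f := fun a => (t a, η a)) continuous_Dmap (ht.prodMk hη)

lemma phi_zero_apply (u : unitInterval) : phi 0 u = u := by
  apply Subtype.ext
  show tcl 0 + (1 - tcl 0) * u.1 = u.1
  rw [tcl_zero]; ring

lemma Dmap_zero (η : C(unitInterval, X)) : Dmap 0 η = η := by
  apply ContinuousMap.ext
  intro u
  show η (phi 0 u) = η u
  rw [phi_zero_apply]

lemma phi_one (u : unitInterval) : phi 1 u = 1 := by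
  apply Subtype.ext
  show tcl 1 + (1 - tcl 1) * u.1 = 1
  rw [tcl_one]; ring

lemma Dmap_one (η : C(unitInterval, X)) : Dmap 1 η = ContinuousMap.const _ (η 1) := by
  apply ContinuousMap.ext
  intro u
  show η (phi 1 u) = η 1
  rw [phi_one]

lemma phi_apply_one (t : ℝ) : phi t 1 = 1 := by
  apply Subtype.ext
  show tcl t + (1 - tcl t) * (1:unitInterval).1 = 1
  have : ((1:unitInterval) : ℝ) = 1 := rfl
  rw [this]; ring

lemma Dmap_apply_one (t : ℝ) (η : C(unitInterval, X)) : Dmap t η 1 = η 1 := by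
  show η (phi t 1) = η 1
  rw [phi_apply_one]

lemma Dmap_const (t : ℝ) (y : X) :
    Dmap t (ContinuousMap.const unitInterval y) = ContinuousMap.const unitInterval y := rfl

end PathStuff

section GlueStuff
variable {A B C : Type} [TopologicalSpace A] [TopologicalSpace B] [TopologicalSpace C]

lemma continuous_glue_inl (f : A → B) (g : A → C) : Continuous (Glue.inl f g) :=
  continuous_quot_mk.comp continuous_inl

lemma continuous_glue_inr (f : A → B) (g : A → C) : Continuous (Glue.inr f g) :=
  continuous_quot_mk.comp continuous_inr

lemma glue_sound (f : A → B) (g : A → C) (a : A) :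
    Glue.inl f g (f a) = Glue.inr f g (g a) := Quot.sound (GlueRel.rel a)

lemma continuous_glue_desc {Z : Type} [TopologicalSpace Z] (f : A → B) (g : A → C)
    (h : B → Z) (k : C → Z) (hc : ∀ a, h (f a) = k (g a))
    (hh : Continuous h) (hk : Continuous k) : Continuous (Glue.desc f g h k hc) :=
  continuous_quot_lift _ (hh.sumElim hk)

lemma glue_ind {f : A → B} {g : A → C} {P : Glue f g → Prop}
    (hl : ∀ b, P (Glue.inl f g b)) (hr : ∀ c, P (Glue.inr f g c)) : ∀ z, P z := by
  intro z
  induction z using Quot.ind with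
  | _ y =>
    cases y with
    | inl b => exact hl b
    | inr c => exact hr c

end GlueStuff

section Maps
variable (X : Type) [TopologicalSpace X] (x : X) (j : ℕ)

def toP (ℓ : LoopsAt X x) : PathsFrom X x := ⟨ℓ.1, ℓ.2.1⟩

lemma continuous_toP : Continuous (toP X x) :=
  Continuous.subtype_mk continuous_subtype_val _

/-- inclusion maps of EXxj -/
abbrev exInl : C(unitInterval, X) → EXxj X x j :=
  Glue.inl (fun γ : PathsFrom X x => (γ.1 : C(unitInterval, X)))
    (fun γ : PathsFrom X x => ((γ, Sph.pt j) : PathsFrom X x × Sph j))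

abbrev exInr : PathsFrom X x × Sph j → EXxj X x j :=
  Glue.inr (fun γ : PathsFrom X x => (γ.1 : C(unitInterval, X)))
    (fun γ : PathsFrom X x => ((γ, Sph.pt j) : PathsFrom X x × Sph j))

lemma ex_sound (γ : PathsFrom X x) : exInl X x j γ.1 = exInr X x j (γ, Sph.pt j) :=
  glue_sound _ _ γ

lemma proj_inl (η : C(unitInterval, X)) : EXxjProj X x j (exInl X x j η) = η 1 := rfl
lemma proj_inr (p : PathsFrom X x × Sph j) : EXxjProj X x j (exInr X x j p) = p.1.1 1 := rfl

def Theta : EXxj X x j → C(unitInterval, X) × Sph j :=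
  Glue.desc _ _ (fun η => (η, Sph.pt j)) (fun p => (p.1.1, STR 0 p.2))
    (fun γ => by dsimp only; rw [STR_pt])

lemma Theta_inl (η : C(unitInterval, X)) :
    Theta X x j (exInl X x j η) = (η, Sph.pt j) := rfl
lemma Theta_inr (p : PathsFrom X x × Sph j) :
    Theta X x j (exInr X x j p) = (p.1.1, STR 0 p.2) := rfl

lemma continuous_Theta : Continuous (Theta X x j) := by
  apply continuous_glue_desc
  · exact continuous_id.prodMk continuous_const
  · have h1 : Continuous fun p : PathsFrom X x × Sph j => (p.1.1 : C(unitInterval, X)) :=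
      continuous_subtype_val.comp continuous_fst
    have h2 : Continuous fun p : PathsFrom X x × Sph j => STR 0 p.2 :=
      Continuous.comp (g := fun q : ℝ × Sph j => STR q.1 q.2)
        (f := fun p : PathsFrom X x × Sph j => ((0:ℝ), p.2))
        (continuous_STR (j := j)) (continuous_const.prodMk continuous_snd)
    exact h1.prodMk h2

def aHat : EXxj X x j → ℝ :=
  Glue.desc _ _ (fun _ => (1:ℝ)) (fun p => aco p.2) (fun γ => by dsimp only; rw [aco_pt])

lemma aHat_inl (η : C(unitInterval, X)) : aHat X x j (exInl X x j η) = 1 := rfl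
lemma aHat_inr (p : PathsFrom X x × Sph j) : aHat X x j (exInr X x j p) = aco p.2 := rfl

lemma continuous_aHat : Continuous (aHat X x j) := by
  apply continuous_glue_desc
  · exact continuous_const
  · exact continuous_aco.comp continuous_snd

lemma Theta_fst_zero : ∀ (y : EXxj X x j),
    (Theta X x j y).2 ≠ Sph.pt j → (Theta X x j y).1 0 = x := by
  apply glue_ind
  · intro η h
    exact absurd rfl h
  · intro p h
    exact p.1.2

lemma Theta_fst_one : ∀ (y : EXxj X x j),
    (Theta X x j y).1 1 = EXxjProj X x j y := by
  apply glue_ind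
  · intro η; rfl
  · intro p; rfl

/-- basepoint of the smash -/
def smpt : LoopSmashSph X x j := Glue.inr _ _ PUnit.unit

abbrev smInl : LoopsAt X x × Sph j → LoopSmashSph X x j := fun q => Glue.inl _ _ q

lemma sm_sound (ℓ : LoopsAt X x) : smInl X x j (ℓ, Sph.pt j) = smpt X x j := by
  exact glue_sound
    (fun a : {p : LoopsAt X x × Sph j // p ∈ {p : LoopsAt X x × Sph j | p.2 = Sph.pt j}} =>
      (a.1 : LoopsAt X x × Sph j))
    (fun _ => PUnit.unit) ⟨(ℓ, Sph.pt j), rfl⟩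

def F0 (e : EXxjFiber X x j) : LoopSmashSph X x j :=
  if h : (Theta X x j e.1).2 = Sph.pt j then smpt X x j
  else smInl X x j (⟨(Theta X x j e.1).1,
      ⟨Theta_fst_zero X x j e.1 h, by rw [Theta_fst_one]; exact e.2⟩⟩, (Theta X x j e.1).2)

lemma F0_mk_inl (η : C(unitInterval, X))
    (hy : EXxjProj X x j (Quot.mk _ (Sum.inl η) : EXxj X x j) = x) :
    F0 X x j ⟨Quot.mk _ (Sum.inl η), hy⟩ = smpt X x j := dif_pos rfl

lemma F0_mk_inr_pt (p : PathsFrom X x × Sph j)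
    (hy : EXxjProj X x j (Quot.mk _ (Sum.inr p) : EXxj X x j) = x)
    (h : STR 0 p.2 = Sph.pt j) :
    F0 X x j ⟨Quot.mk _ (Sum.inr p), hy⟩ = smpt X x j := dif_pos h

lemma F0_mk_inr_ne (p : PathsFrom X x × Sph j)
    (hy : EXxjProj X x j (Quot.mk _ (Sum.inr p) : EXxj X x j) = x)
    (h : ¬ STR 0 p.2 = Sph.pt j) :
    F0 X x j ⟨Quot.mk _ (Sum.inr p), hy⟩ =
      smInl X x j (⟨p.1.1, ⟨p.1.2, hy⟩⟩, STR 0 p.2) := dif_neg h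

lemma cap_verify (V : Set (LoopSmashSph X x j)) (hsm : smpt X x j ∈ V) :
    ∀ e' : EXxjFiber X x j, e'.1 ∈ aHat X x j ⁻¹' Set.Ioi 0 → F0 X x j e' ∈ V := by
  rintro ⟨y', hy'⟩ hW
  revert hW
  revert hy'
  induction y' using Quot.ind with
  | _ w =>
  rcases w with η | p
  · intro hy' _
    rw [F0_mk_inl X x j η hy']
    exact hsm
  · intro hy' hW
    have hW' : 0 < aco p.2 := hW
    have hpt : STR 0 p.2 = Sph.pt j := (STR_zero_pt_iff p.2).mpr (le_of_lt hW')
    rw [F0_mk_inr_pt X x j p hy' hpt]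
    exact hsm

lemma box_verify (V : Set (LoopSmashSph X x j)) (hsm : smpt X x j ∈ V)
    (A : Set C(unitInterval, X)) (B : Set (Sph j))
    (hsub : ((Subtype.val ⁻¹' A : Set (LoopsAt X x)) ×ˢ B) ⊆ smInl X x j ⁻¹' V) :
    ∀ e' : EXxjFiber X x j, e'.1 ∈ Theta X x j ⁻¹' (A ×ˢ B) → F0 X x j e' ∈ V := by
  rintro ⟨y', hy'⟩ hW
  revert hW
  revert hy'
  induction y' using Quot.ind with
  | _ w =>
  rcases w with η | p
  · intro hy' _
    rw [F0_mk_inl X x j η hy']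
    exact hsm
  · intro hy' hW
    have h1 : p.1.1 ∈ A := hW.1
    have h2 : STR 0 p.2 ∈ B := hW.2
    by_cases hp : STR 0 p.2 = Sph.pt j
    · rw [F0_mk_inr_pt X x j p hy' hp]
      exact hsm
    · rw [F0_mk_inr_ne X x j p hy' hp]
      exact hsub ⟨h1, h2⟩

lemma continuous_F0 : Continuous (F0 X x j) := by
  rw [continuous_def]
  intro V hV
  have hULo : IsOpen (smInl X x j ⁻¹' V) := hV.preimage (continuous_glue_inl _ _)
  rw [isOpen_iff_forall_mem_open]
  rintro ⟨y, hy⟩ he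
  change F0 X x j ⟨y, hy⟩ ∈ V at he
  suffices h : ∃ W : Set (EXxj X x j), IsOpen W ∧ y ∈ W ∧
      ∀ e' : EXxjFiber X x j, e'.1 ∈ W → F0 X x j e' ∈ V by
    obtain ⟨W, hWo, hWy, hWs⟩ := h
    exact ⟨Subtype.val ⁻¹' W, fun e' he' => hWs e' he',
      hWo.preimage continuous_subtype_val, hWy⟩
  revert he
  revert hy
  induction y using Quot.ind with
  | _ w =>
  rcases w with η | p
  · -- inl case
    intro hy he
    rw [F0_mk_inl X x j η hy] at he
    refine ⟨aHat X x j ⁻¹' Set.Ioi 0,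
      isOpen_Ioi.preimage (continuous_aHat X x j), ?_, cap_verify X x j V he⟩
    exact (by norm_num : (0:ℝ) < 1)
  · -- inr case
    intro hy he
    by_cases hpt : STR 0 p.2 = Sph.pt j
    · rw [F0_mk_inr_pt X x j p hy hpt] at he
      have hmem : ((⟨p.1.1, ⟨p.1.2, hy⟩⟩ : LoopsAt X x), Sph.pt j) ∈ smInl X x j ⁻¹' V := by
        show smInl X x j ((⟨p.1.1, ⟨p.1.2, hy⟩⟩ : LoopsAt X x), Sph.pt j) ∈ V
        exact (sm_sound X x j _).symm ▸ he
      obtain ⟨A', B, hA'o, hBo, hmA', hmB, hsub⟩ :=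
        isOpen_prod_iff.mp hULo _ _ hmem
      obtain ⟨A, hAo, hA⟩ := isOpen_induced_iff.mp hA'o
      refine ⟨aHat X x j ⁻¹' Set.Ioi 0 ∪ Theta X x j ⁻¹' (A ×ˢ B),
        IsOpen.union (isOpen_Ioi.preimage (continuous_aHat X x j))
          ((hAo.prod hBo).preimage (continuous_Theta X x j)), ?_, ?_⟩
      · right
        have hmemA : p.1.1 ∈ A := by
          have h3 : (⟨p.1.1, ⟨p.1.2, hy⟩⟩ : LoopsAt X x) ∈ A' := hmA'
          rw [← hA] at h3
          exact h3
        have hmemB : STR 0 p.2 ∈ B := by rw [hpt]; exact hmB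
        exact ⟨hmemA, hmemB⟩
      · intro e' he'
        rcases he' with h1 | h2
        · exact cap_verify X x j V he e' h1
        · refine box_verify X x j V he A B ?_ e' h2
          rw [hA]
          exact hsub
    · rw [F0_mk_inr_ne X x j p hy hpt] at he
      have hmem : ((⟨p.1.1, ⟨p.1.2, hy⟩⟩ : LoopsAt X x), STR 0 p.2) ∈ smInl X x j ⁻¹' V := he
      obtain ⟨A', B, hA'o, hBo, hmA', hmB, hsub⟩ :=
        isOpen_prod_iff.mp hULo _ _ hmem
      obtain ⟨A, hAo, hA⟩ := isOpen_induced_iff.mp hA'o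
      have hver : ∀ e' : EXxjFiber X x j,
          e'.1 ∈ Theta X x j ⁻¹' (A ×ˢ (B ∩ {t | t ≠ Sph.pt j})) → F0 X x j e' ∈ V := by
        rintro ⟨y', hy'⟩ hW
        revert hW
        revert hy'
        induction y' using Quot.ind with
        | _ w' =>
        rcases w' with η' | p'
        · intro hy' hW
          have hc : Sph.pt j ∈ (B ∩ {t | t ≠ Sph.pt j}) := hW.2
          exact absurd rfl hc.2
        · intro hy' hW
          have h1 : p'.1.1 ∈ A := hW.1
          have h2 : STR 0 p'.2 ∈ B ∩ {t | t ≠ Sph.pt j} := hW.2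
          rw [F0_mk_inr_ne X x j p' hy' h2.2]
          apply hsub
          rw [← hA]
          exact ⟨h1, h2.1⟩
      refine ⟨Theta X x j ⁻¹' (A ×ˢ (B ∩ {t | t ≠ Sph.pt j})),
        ((hAo.prod (hBo.inter isOpen_ne)).preimage (continuous_Theta X x j)), ?_, hver⟩
      have hmemA : p.1.1 ∈ A := by
        have h3 : (⟨p.1.1, ⟨p.1.2, hy⟩⟩ : LoopsAt X x) ∈ A' := hmA'
        rw [← hA] at h3
        exact h3
      exact ⟨hmemA, hmB, hpt⟩

def mfun (q : LoopsAt X x × Sph j) : EXxj X x j :=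
  if aco q.2 ≤ 0 then exInr X x j (toP X x q.1, STR 0 q.2)
  else exInl X x j (Dmap (aco q.2) q.1.1)

lemma continuous_mfun : Continuous (mfun X x j) := by
  unfold mfun
  apply Continuous.if_le
  · exact (continuous_glue_inr _ _).comp
      (((continuous_toP X x).comp continuous_fst).prodMk
        (continuous_STR_comp continuous_const (continuous_snd)))
  · exact (continuous_glue_inl _ _).comp
      (continuous_Dmap_comp (continuous_aco.comp continuous_snd)
        (continuous_subtype_val.comp continuous_fst))
  · exact continuous_aco.comp continuous_snd
  · exact continuous_const
  · intro q hq
    have hpt : STR 0 q.2 = Sph.pt j :=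
      STR_pt_of_le 0 q.2 (by rw [cc_zero, hq])
    rw [hpt, hq, ← ex_sound X x j (toP X x q.1)]
    have hD : Dmap (0:ℝ) q.1.1 = q.1.1 := Dmap_zero q.1.1
    rw [hD]
    rfl

lemma mfun_proj (q : LoopsAt X x × Sph j) : EXxjProj X x j (mfun X x j q) = x := by
  unfold mfun
  split_ifs with h
  · exact q.1.2.2
  · show Dmap (aco q.2) q.1.1 1 = x
    rw [Dmap_apply_one]
    exact q.1.2.2

def GFib (q : LoopsAt X x × Sph j) : EXxjFiber X x j := ⟨mfun X x j q, mfun_proj X x j q⟩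

lemma continuous_GFib : Continuous (GFib X x j) := (continuous_mfun X x j).subtype_mk _

def fibpt : EXxjFiber X x j := ⟨exInl X x j (ContinuousMap.const unitInterval x), rfl⟩

def G0 : LoopSmashSph X x j → EXxjFiber X x j :=
  Glue.desc _ _ (GFib X x j) (fun _ => fibpt X x j) (fun a => by
    apply Subtype.ext
    show mfun X x j a.1 = exInl X x j (ContinuousMap.const unitInterval x)
    have h2 : a.1.2 = Sph.pt j := a.2
    unfold mfun
    rw [h2, aco_pt, if_neg (by norm_num), Dmap_one]
    have h3 : a.1.1.1 1 = x := a.1.1.2.2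
    rw [h3])

lemma continuous_G0 : Continuous (G0 X x j) :=
  continuous_glue_desc _ _ _ _ _ (continuous_GFib X x j) continuous_const

lemma G0_mk_inl (q : LoopsAt X x × Sph j) :
    G0 X x j (Quot.mk _ (Sum.inl q)) = GFib X x j q := rfl

lemma G0_smpt : G0 X x j (smpt X x j) = fibpt X x j := rfl

def th (t : ℝ) : ℝ := 1 - (3/2) * t

lemma continuous_th : Continuous th := by
  unfold th
  exact continuous_const.sub (continuous_const.mul continuous_id)

lemma F0_fibpt : F0 X x j (fibpt X x j) = smpt X x j := dif_pos rfl

def h1bigC : C((LoopsAt X x × Sph j) × unitInterval, LoopSmashSph X x j) :=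
  ⟨fun q => smInl X x j (q.1.1, STR (th (1 - q.2.1)) q.1.2), by
    apply (continuous_glue_inl _ _).comp
    apply Continuous.prodMk
    · exact continuous_fst.comp continuous_fst
    · exact continuous_STR_comp
        (continuous_th.comp (continuous_const.sub (continuous_subtype_val.comp continuous_snd)))
        (continuous_snd.comp continuous_fst)⟩

def H1desc : LoopSmashSph X x j → C(unitInterval, LoopSmashSph X x j) :=
  Glue.desc _ _ (fun q => ContinuousMap.curry (h1bigC X x j) q)
    (fun _ => ContinuousMap.const _ (smpt X x j))
    (fun a => by
      apply ContinuousMap.ext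
      intro t
      show smInl X x j (a.1.1, STR (th (1 - t.1)) a.1.2) = smpt X x j
      have h2 : a.1.2 = Sph.pt j := a.2
      rw [h2, STR_pt, sm_sound])

lemma continuous_H1desc : Continuous (H1desc X x j) :=
  continuous_glue_desc _ _ _ _ _ (ContinuousMap.curry (h1bigC X x j)).continuous
    continuous_const

lemma H1desc_inl (q : LoopsAt X x × Sph j) (t : unitInterval) :
    H1desc X x j (Quot.mk _ (Sum.inl q)) t
      = smInl X x j (q.1, STR (th (1 - t.1)) q.2) := rfl

lemma h1_map_one : ∀ z : LoopSmashSph X x j, H1desc X x j z 1 = z := by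
  intro z
  induction z using Quot.ind with
  | _ w =>
  rcases w with q | u
  · rw [H1desc_inl]
    have h1 : th (1 - ((1:unitInterval):ℝ)) = 1 := by norm_num [th]
    rw [h1, STR_one]
    rfl
  · cases u
    rfl

lemma h1_map_zero : ∀ z : LoopSmashSph X x j,
    H1desc X x j z 0 = F0 X x j (G0 X x j z) := by
  intro z
  induction z using Quot.ind with
  | _ w =>
  rcases w with q | u
  · rw [H1desc_inl]
    have hth : th (1 - ((0:unitInterval):ℝ)) = -(1/2) := by norm_num [th]
    rw [hth]
    rw [G0_mk_inl]
    by_cases h : aco q.2 ≤ 0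
    · have hmf : mfun X x j q = exInr X x j (toP X x q.1, STR 0 q.2) := if_pos h
      have hG : GFib X x j q
          = (⟨Quot.mk _ (Sum.inr (toP X x q.1, STR 0 q.2)), q.1.2.2⟩ : EXxjFiber X x j) :=
        Subtype.ext hmf
      rw [hG]
      by_cases h2 : -(1/2) ≤ aco q.2
      · have hpt2 : STR 0 (STR 0 q.2) = Sph.pt j := by
          rw [STR_zero_pt_iff, aco_STR_zero]
          exact le_min (by norm_num) (by linarith)
        rw [F0_mk_inr_pt X x j (toP X x q.1, STR 0 q.2) q.1.2.2 hpt2]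
        rw [STR_pt_of_le _ _ (by rw [cc_neg_half]; exact h2), sm_sound]
      · push_neg at h2
        have hne : ¬ STR 0 (STR 0 q.2) = Sph.pt j := by
          rw [STR_zero_pt_iff, aco_STR_zero]
          rw [min_eq_right (by linarith)]
          push_neg
          linarith
        rw [F0_mk_inr_ne X x j (toP X x q.1, STR 0 q.2) q.1.2.2 hne]
        rw [STR_comp]
        congr 1
    · push_neg at h
      have hmf : mfun X x j q = exInl X x j (Dmap (aco q.2) q.1.1) := if_neg (not_le.mpr h)
      have hG : GFib X x j q
          = (⟨Quot.mk _ (Sum.inl (Dmap (aco q.2) q.1.1)),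
              by show Dmap (aco q.2) q.1.1 1 = x
                 rw [Dmap_apply_one]; exact q.1.2.2⟩ : EXxjFiber X x j) :=
        Subtype.ext hmf
      rw [hG]
      rw [F0_mk_inl]
      rw [STR_pt_of_le _ _ (by rw [cc_neg_half]; linarith), sm_sound]
  · cases u
    show smpt X x j = F0 X x j (fibpt X x j)
    rw [F0_fibpt]

def amount (t a : ℝ) : ℝ := min (max (2*a - 2 + 3*t) 0) t

lemma continuous_amount : Continuous fun p : ℝ × ℝ => amount p.1 p.2 := by
  unfold amount
  apply Continuous.min
  · apply Continuous.max _ continuous_const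
    exact ((continuous_const.mul continuous_snd).sub continuous_const).add
      (continuous_const.mul continuous_fst)
  · exact continuous_fst

lemma amount_arg_one (t : ℝ) (h1 : 0 ≤ t) (h2 : t ≤ 1) : amount t 1 = t := by
  unfold amount
  rw [max_eq_left (by linarith), min_eq_right (by linarith)]

lemma amount_th (t : ℝ) (h1 : 0 ≤ t) : amount t (th t) = 0 := by
  unfold amount th
  rw [show 2*(1 - (3/2)*t) - 2 + 3*t = 0 by ring, max_self, min_eq_left h1]

lemma th_le_one (t : ℝ) (h : 0 ≤ t) : th t ≤ 1 := by unfold th; linarith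
lemma neg_half_le_th (t : ℝ) (h : t ≤ 1) : -(1/2) ≤ th t := by unfold th; linarith

def kbigC : C((PathsFrom X x × Sph j) × unitInterval, EXxj X x j) :=
  ⟨fun q => if aco q.1.2 ≤ th q.2.1
      then exInr X x j (q.1.1, STR (th q.2.1) q.1.2)
      else exInl X x j (Dmap (amount q.2.1 (aco q.1.2)) q.1.1.1), by
    apply Continuous.if_le
    · apply (continuous_glue_inr _ _).comp
      apply Continuous.prodMk
      · exact continuous_fst.comp continuous_fst
      · exact continuous_STR_comp
          (continuous_th.comp (continuous_subtype_val.comp continuous_snd))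
          (continuous_snd.comp continuous_fst)
    · apply (continuous_glue_inl _ _).comp
      apply continuous_Dmap_comp
      · exact Continuous.comp (g := fun p : ℝ × ℝ => amount p.1 p.2)
          (f := fun q : (PathsFrom X x × Sph j) × unitInterval => (q.2.1, aco q.1.2))
          continuous_amount
          ((continuous_subtype_val.comp continuous_snd).prodMk
            (continuous_aco.comp (continuous_snd.comp continuous_fst)))
      · exact continuous_subtype_val.comp (continuous_fst.comp continuous_fst)
    · exact continuous_aco.comp (continuous_snd.comp continuous_fst)
    · exact continuous_th.comp (continuous_subtype_val.comp continuous_snd)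
    · intro q hq
      have ht1 : 0 ≤ q.2.1 := q.2.2.1
      have ht2 : q.2.1 ≤ 1 := q.2.2.2
      have hcc : cc (th q.2.1) = th q.2.1 :=
        cc_eq _ (neg_half_le_th _ ht2) (th_le_one _ ht1)
      have hpt : STR (th q.2.1) q.1.2 = Sph.pt j :=
        STR_pt_of_le _ _ (by rw [hcc, hq])
      rw [hpt, hq, amount_th _ ht1, Dmap_zero]
      exact (ex_sound X x j q.1.1).symm⟩

def lbigC : C(C(unitInterval, X) × unitInterval, EXxj X x j) :=
  ⟨fun q => exInl X x j (Dmap q.2.1 q.1), by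
    apply (continuous_glue_inl _ _).comp
    exact continuous_Dmap_comp (continuous_subtype_val.comp continuous_snd) continuous_fst⟩

def khat : EXxj X x j → C(unitInterval, EXxj X x j) :=
  Glue.desc _ _
    (fun η => ContinuousMap.curry (lbigC X x j) η)
    (fun p => ContinuousMap.curry (kbigC X x j) p)
    (fun γ => by
      apply ContinuousMap.ext
      intro t
      show exInl X x j (Dmap t.1 γ.1)
        = if aco (Sph.pt j) ≤ th t.1
          then exInr X x j (γ, STR (th t.1) (Sph.pt j))
          else exInl X x j (Dmap (amount t.1 (aco (Sph.pt j))) γ.1)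
      rw [aco_pt]
      by_cases hc : (1:ℝ) ≤ th t.1
      · rw [if_pos hc]
        have ht0 : t.1 = 0 := by
          have : th t.1 = 1 - (3/2) * t.1 := rfl
          have h1 := t.2.1
          nlinarith [hc, this]
        rw [STR_pt, ht0, Dmap_zero, ex_sound X x j γ]
      · rw [if_neg hc, amount_arg_one _ t.2.1 t.2.2])

lemma continuous_khat : Continuous (khat X x j) :=
  continuous_glue_desc _ _ _ _ _ (ContinuousMap.curry (lbigC X x j)).continuous
    (ContinuousMap.curry (kbigC X x j)).continuous

lemma khat_inl (η : C(unitInterval, X)) (t : unitInterval) :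
    khat X x j (Quot.mk _ (Sum.inl η)) t = exInl X x j (Dmap t.1 η) := rfl

lemma khat_proj : ∀ (y : EXxj X x j) (t : unitInterval),
    EXxjProj X x j (khat X x j y t) = EXxjProj X x j y := by
  intro y t
  induction y using Quot.ind with
  | _ w =>
  rcases w with η | p
  · show Dmap t.1 η 1 = η 1
    exact Dmap_apply_one _ _
  · show EXxjProj X x j (if aco p.2 ≤ th t.1
        then exInr X x j (p.1, STR (th t.1) p.2)
        else exInl X x j (Dmap (amount t.1 (aco p.2)) p.1.1)) = p.1.1 1
    split_ifs with h
    · rfl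
    · show Dmap (amount t.1 (aco p.2)) p.1.1 1 = p.1.1 1
      exact Dmap_apply_one _ _

def KFib : unitInterval × EXxjFiber X x j → EXxjFiber X x j :=
  fun z => ⟨khat X x j z.2.1 z.1, by rw [khat_proj]; exact z.2.2⟩

lemma continuous_KFib : Continuous (KFib X x j) := by
  apply Continuous.subtype_mk
  have h1 : Continuous fun z : unitInterval × EXxjFiber X x j =>
      ((khat X x j z.2.1 : C(unitInterval, EXxj X x j)), z.1) :=
    ((continuous_khat X x j).comp (continuous_subtype_val.comp continuous_snd)).prodMk
      continuous_fst
  exact ContinuousEval.continuous_eval.comp h1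

lemma K_zero (e : EXxjFiber X x j) : KFib X x j (0, e) = e := by
  apply Subtype.ext
  show khat X x j e.1 0 = e.1
  obtain ⟨y, hy⟩ := e
  induction y using Quot.ind with
  | _ w =>
  rcases w with η | p
  · show exInl X x j (Dmap (0:unitInterval).1 η) = _
    rw [show ((0:unitInterval):ℝ) = 0 from rfl, Dmap_zero]
    rfl
  · show (if aco p.2 ≤ th (0:unitInterval).1
        then exInr X x j (p.1, STR (th (0:unitInterval).1) p.2)
        else exInl X x j (Dmap (amount (0:unitInterval).1 (aco p.2)) p.1.1)) = _
    rw [show th ((0:unitInterval):ℝ) = 1 by norm_num [th]]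
    rw [if_pos (aco_le_one p.2), STR_one]
    rfl

lemma G0_smInl (q : LoopsAt X x × Sph j) :
    G0 X x j (smInl X x j q) = GFib X x j q := rfl

lemma K_one (e : EXxjFiber X x j) : KFib X x j (1, e) = G0 X x j (F0 X x j e) := by
  obtain ⟨y, hy⟩ := e
  revert hy
  induction y using Quot.ind with
  | _ w =>
  rcases w with η | p
  · intro hy
    apply Subtype.ext
    have hy' : η 1 = x := hy
    rw [F0_mk_inl X x j η hy, G0_smpt]
    show exInl X x j (Dmap (1:unitInterval).1 η) = exInl X x j (ContinuousMap.const _ x)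
    rw [show ((1:unitInterval):ℝ) = 1 from rfl, Dmap_one, hy']
  · intro hy
    apply Subtype.ext
    have hth1 : th ((1:unitInterval):ℝ) = -(1/2) := by norm_num [th]
    by_cases h0 : (0:ℝ) ≤ aco p.2
    · rw [F0_mk_inr_pt X x j p hy ((STR_zero_pt_iff p.2).mpr h0), G0_smpt]
      show (if aco p.2 ≤ th (1:unitInterval).1
          then exInr X x j (p.1, STR (th (1:unitInterval).1) p.2)
          else exInl X x j (Dmap (amount (1:unitInterval).1 (aco p.2)) p.1.1))
        = exInl X x j (ContinuousMap.const _ x)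
      rw [hth1, if_neg (by linarith)]
      have hAm : amount 1 (aco p.2) = 1 := by
        unfold amount
        rw [max_eq_left (by linarith), min_eq_right (by linarith)]
      have hy' : p.1.1 1 = x := hy
      rw [show ((1:unitInterval):ℝ) = 1 from rfl, hAm, Dmap_one, hy']
    · push_neg at h0
      rw [F0_mk_inr_ne X x j p hy (fun hc => absurd ((STR_zero_pt_iff p.2).mp hc) (by linarith)),
        G0_smInl]
      have haS : aco (STR 0 p.2) = 1 + 2*aco p.2 := by
        rw [aco_STR_zero, min_eq_right (by linarith)]
      show (if aco p.2 ≤ th (1:unitInterval).1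
          then exInr X x j (p.1, STR (th (1:unitInterval).1) p.2)
          else exInl X x j (Dmap (amount (1:unitInterval).1 (aco p.2)) p.1.1))
        = mfun X x j (⟨p.1.1, ⟨p.1.2, hy⟩⟩, STR 0 p.2)
      unfold mfun
      dsimp only
      rw [hth1, haS, show ((1:unitInterval):ℝ) = 1 from rfl]
      by_cases h2 : aco p.2 ≤ -(1/2)
      · rw [if_pos h2, if_pos (by linarith), STR_comp]
        congr 1
      · push_neg at h2
        rw [if_neg (by linarith), if_neg (by linarith)]
        have hAm : amount 1 (aco p.2) = 1 + 2*aco p.2 := by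
          unfold amount
          rw [max_eq_left (by linarith), min_eq_left (by linarith)]
          ring
        rw [hAm]

end Maps
end Gx
/-- The fiber over the basepoint `x` of the fibration
`E(X,x)_j → X` is homotopy equivalent to the smash product `(Ω_x X)_+ ∧ S^j`. -/
theorem fiber_of_EXxj_homotopyEquiv_loop_smash_sphere :
    Nonempty (ContinuousMap.HomotopyEquiv (EXxjFiber X x j) (LoopSmashSph X x j)) := by
  classical
  refine ⟨⟨⟨Gx.F0 X x j, Gx.continuous_F0 X x j⟩, ⟨Gx.G0 X x j, Gx.continuous_G0 X x j⟩,
    ⟨?_⟩, ⟨?_⟩⟩⟩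
  · refine ⟨⟨fun z => Gx.KFib X x j (unitInterval.symm z.1, z.2), ?_⟩, ?_, ?_⟩
    · exact (Gx.continuous_KFib X x j).comp
        ((unitInterval.continuous_symm.comp continuous_fst).prodMk continuous_snd)
    · intro e
      show Gx.KFib X x j (unitInterval.symm 0, e) = _
      rw [unitInterval.symm_zero, Gx.K_one]
      rfl
    · intro e
      show Gx.KFib X x j (unitInterval.symm 1, e) = _
      rw [unitInterval.symm_one, Gx.K_zero]
      rfl
  · refine ⟨⟨fun z => Gx.H1desc X x j z.2 z.1, ?_⟩, ?_, ?_⟩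
    · have h1 : Continuous fun z : unitInterval × LoopSmashSph X x j =>
          ((Gx.H1desc X x j z.2 : C(unitInterval, LoopSmashSph X x j)), z.1) :=
        ((Gx.continuous_H1desc X x j).comp continuous_snd).prodMk continuous_fst
      exact ContinuousEval.continuous_eval.comp h1
    · intro z
      show Gx.H1desc X x j z 0 = _
      rw [Gx.h1_map_zero]
      rfl
    · intro z
      exact Gx.h1_map_one X x j z
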